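/- Let K be a field of characteristic zero. For every t ∈ K with t ≠ 0 and t ≠ 1, the degree-6 polynomial (P(X)² − (1 − t))·(P(X) − 1) ∈ K[X] is squarefree. (Hence for t ∉ {0,1} the fibre X_t : y² = (P(x)² − (1−t))(P(x) − 1) of the family of Proposition 4.2 is a smooth hyperelliptic curve of genus 2.) -/
import Mathlib

open Polynomial

private lemma coprime_of_comb {K : Type*} [Field K] {p r u v : K[X]} {c : K} (hc : c ≠ 0)
    (h : u * p + v * r = C c) : IsCoprime p r := by
  refine ⟨C c⁻¹ * u, C c⁻¹ * v, ?_⟩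
  have : C c⁻¹ * u * p + C c⁻¹ * v * r = C c⁻¹ * (u * p + v * r) := by ring
  rw [this, h, ← C_mul, inv_mul_cancel₀ hc, C_1]

/-- For `t ∉ {0,1}` the degree-6 polynomial `(P(X)² − (1−t))·(P(X) − 1)` with
`P(X) = 4·X·(X−1)` is squarefree over a field of characteristic zero. -/
theorem stmt_6 (K : Type*) [Field K] [CharZero K] (t : K) (h0 : t ≠ 0) (h1 : t ≠ 1) :
    Squarefree (((4 * X * (X - 1)) ^ 2 - C (1 - t)) * (4 * X * (X - 1) - 1) : K[X]) := by
  set q : K[X] := (4 * X * (X - 1)) ^ 2 - C (1 - t) with hq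
  set r : K[X] := 4 * X * (X - 1) - 1 with hr
  have hc : (1 : K) - t ≠ 0 := sub_ne_zero.mpr (Ne.symm h1)
  have hCsub : (C (1 - t) : K[X]) = 1 - C t := by rw [C_sub, C_1]
  -- coprime q r
  have hcop : IsCoprime q r := by
    refine coprime_of_comb (c := t) h0 (u := 1) (v := -(4 * X * (X - 1) + 1)) ?_
    rw [hq, hCsub, show (C t : K[X]) = C t from rfl]
    ring
  -- q is separable
  have hq' : derivative q = 2 * (4 * X * (X - 1)) * (8 * X - 4) := by
    rw [hq]
    simp only [derivative_sub, derivative_C, sub_zero, derivative_pow, derivative_mul,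
      derivative_X, derivative_one, derivative_ofNat, Nat.cast_ofNat, map_ofNat, mul_one, mul_zero, zero_mul,
      zero_add, add_zero]
    ring
  have hqsep : q.Separable := by
    rw [Polynomial.Separable, hq']
    have h2 : IsCoprime q (2 : K[X]) := by
      refine coprime_of_comb (c := (2 : K)) two_ne_zero (u := 0) (v := 1) ?_
      rw [map_ofNat]
      ring
    have hP : IsCoprime q (4 * X * (X - 1)) := by
      refine coprime_of_comb (c := (1 - t)) hc (u := -1) (v := 4 * X * (X - 1)) ?_
      rw [hq, hCsub]
      ring
    have hD : IsCoprime q (8 * X - 4) := by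
      refine coprime_of_comb (c := 4 * t) (by simpa using h0) (u := 4)
        (v := -(8 * X ^ 3 - 12 * X ^ 2 + 2 * X + 1)) ?_
      rw [hq, hCsub, show (C (4 * t) : K[X]) = 4 * C t by rw [C_mul, map_ofNat]]
      ring
    exact (h2.mul_right hP).mul_right hD
  -- r is separable
  have hrsep : r.Separable := by
    rw [Polynomial.Separable]
    have hr' : derivative r = 8 * X - 4 := by rw [hr]; simp; ring
    rw [hr']
    refine coprime_of_comb (c := (8 : K)) (by norm_num) (u := -4) (v := 2 * X - 1) ?_
    rw [hr, show (C (8:K) : K[X]) = 8 from map_ofNat _ 8]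
    ring
  exact squarefree_mul_iff.mpr ⟨hcop.isRelPrime, hqsep.squarefree, hrsep.squarefree⟩
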